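/- On the open set {(s,t,x₃,x₄) ∈ ℝ⁴ : s > 0} with the Riemannian metric g = ds² + s^{2/3} dt² + s^{4/3}(dx₃² + dx₄²), and with f(s) = (2/3)·ln s, the pair (g, f) is a steady gradient Ricci soliton: ∇df = −Rc. Moreover the Ricci curvature in the orthonormal frame E₁ = ∂ₛ, E₂ = s^{−1/3}∂ₜ, E₃ = s^{−2/3}∂₃, E₄ = s^{−2/3}∂₄ satisfies R₁₁ = 2/(3s²), R₂₂ = −2/(9s²), R₃₃ = R₄₄ = −4/(9s²), R_{ij} = 0 for i ≠ j, and the scalar curvature is R = −4/(9s²). -/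

import Mathlib

/-- Partial derivative in the i-th coordinate direction on ℝ⁴. -/
noncomputable def pd (i : Fin 4) (F : (Fin 4 → ℝ) → ℝ) (x : Fin 4 → ℝ) : ℝ :=
  fderiv ℝ F x (Pi.single i 1)

/-- Christoffel symbols Γ^k_{ij} of a metric on ℝ⁴. -/
noncomputable def christoffel (g : (Fin 4 → ℝ) → Matrix (Fin 4) (Fin 4) ℝ)
    (k i j : Fin 4) (x : Fin 4 → ℝ) : ℝ :=
  (1 / 2) * ∑ l : Fin 4, (g x)⁻¹ k l *
    (pd i (fun y => g y l j) x + pd j (fun y => g y l i) x - pd l (fun y => g y i j) x)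

/-- Curvature tensor R_{ijkl} = ⟨∇_i∇_j ∂_k − ∇_j∇_i ∂_k, ∂_l⟩. -/
noncomputable def riem (g : (Fin 4 → ℝ) → Matrix (Fin 4) (Fin 4) ℝ)
    (i j k l : Fin 4) (x : Fin 4 → ℝ) : ℝ :=
  ∑ m : Fin 4, g x l m *
    (pd i (christoffel g m j k) x - pd j (christoffel g m i k) x
      + ∑ n : Fin 4, (christoffel g m i n x * christoffel g n j k x
        - christoffel g m j n x * christoffel g n i k x))

/-- Ricci tensor Ric_{jk} = g^{im} R_{ijkm}. -/
noncomputable def ricci (g : (Fin 4 → ℝ) → Matrix (Fin 4) (Fin 4) ℝ)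
    (j k : Fin 4) (x : Fin 4 → ℝ) : ℝ :=
  ∑ i : Fin 4, ∑ m : Fin 4, (g x)⁻¹ i m * riem g i j k m x

/-- Scalar curvature. -/
noncomputable def scal (g : (Fin 4 → ℝ) → Matrix (Fin 4) (Fin 4) ℝ)
    (x : Fin 4 → ℝ) : ℝ :=
  ∑ j : Fin 4, ∑ k : Fin 4, (g x)⁻¹ j k * ricci g j k x

/-- Hessian ∇df of a function with respect to a metric on ℝ⁴. -/
noncomputable def hess (g : (Fin 4 → ℝ) → Matrix (Fin 4) (Fin 4) ℝ)
    (f : (Fin 4 → ℝ) → ℝ) (i j : Fin 4) (x : Fin 4 → ℝ) : ℝ :=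
  pd i (pd j f) x - ∑ k : Fin 4, christoffel g k i j x * pd k f x

/-- The metric g = ds² + s^{2/3} dt² + s^{4/3}(dx₃² + dx₄²) on {s > 0}. -/
noncomputable def g9 : (Fin 4 → ℝ) → Matrix (Fin 4) (Fin 4) ℝ := fun x =>
  Matrix.diagonal ![1, (x 0) ^ ((2 : ℝ) / 3), (x 0) ^ ((4 : ℝ) / 3), (x 0) ^ ((4 : ℝ) / 3)]

/-- The potential f(s) = (2/3)·ln s. -/
noncomputable def f9 : (Fin 4 → ℝ) → ℝ := fun x => (2 / 3) * Real.log (x 0)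

set_option maxHeartbeats 1600000

section AuxRicci9

noncomputable def gE9 : Fin 4 → ℝ
  | 0 => 0 | 1 => 2/3 | 2 => 4/3 | 3 => 4/3

lemma pd_mul_rpow9 (a c : ℝ) (i : Fin 4) (x : Fin 4 → ℝ) (hx : 0 < x 0) :
    pd i (fun y => a * (y 0) ^ c) x = if i = 0 then a * c * (x 0) ^ (c - 1) else 0 := by
  have h1 : HasFDerivAt (fun y : Fin 4 → ℝ => y 0)
      (ContinuousLinearMap.proj 0 : (Fin 4 → ℝ) →L[ℝ] ℝ) x :=
    (ContinuousLinearMap.proj (R := ℝ) (φ := fun _ : Fin 4 => ℝ) 0).hasFDerivAt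
  have h2 : HasDerivAt (fun t : ℝ => t ^ c) (c * (x 0) ^ (c - 1)) (x 0) :=
    Real.hasDerivAt_rpow_const (Or.inl hx.ne')
  have h3 := (h2.comp_hasFDerivAt x h1).const_mul a
  have h4 : HasFDerivAt (fun y : Fin 4 → ℝ => a * (y 0) ^ c)
      (a • (c * x 0 ^ (c - 1)) • (ContinuousLinearMap.proj 0 : (Fin 4 → ℝ) →L[ℝ] ℝ)) x := h3
  rw [pd, h4.fderiv]
  simp [Pi.single_apply]
  rcases eq_or_ne i 0 with h | h <;> simp [h, eq_comm]
  ring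

lemma g9_apply (l j : Fin 4) (y : Fin 4 → ℝ) :
    g9 y l j = (if l = j then 1 else 0) * (y 0) ^ gE9 l := by
  fin_cases l <;> fin_cases j <;> simp [g9, gE9, Matrix.diagonal]

lemma g9_inv (x : Fin 4 → ℝ) (hx : 0 < x 0) (k l : Fin 4) :
    (g9 x)⁻¹ k l = (if k = l then 1 else 0) * (x 0) ^ (-(gE9 k)) := by
  have h : (g9 x)⁻¹ = Matrix.diagonal ![1, (x 0) ^ (-(2:ℝ)/3), (x 0) ^ (-(4:ℝ)/3), (x 0) ^ (-(4:ℝ)/3)] := by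
    apply Matrix.inv_eq_right_inv
    rw [g9, Matrix.diagonal_mul_diagonal]
    ext i j
    fin_cases i <;> fin_cases j <;>
      simp [Matrix.diagonal, Matrix.one_apply, ← Real.rpow_add hx] <;> norm_num
  rw [h]
  fin_cases k <;> fin_cases l <;> simp [Matrix.diagonal, gE9] <;> norm_num

lemma pd_g9 (i l j : Fin 4) (x : Fin 4 → ℝ) (hx : 0 < x 0) :
    pd i (fun y => g9 y l j) x
      = if i = 0 then (if l = j then 1 else 0) * gE9 l * (x 0) ^ (gE9 l - 1) else 0 := by
  have h : (fun y => g9 y l j) = fun y => (if l = j then 1 else 0) * (y 0) ^ gE9 l :=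
    funext fun y => g9_apply l j y
  rw [h, pd_mul_rpow9 _ _ _ _ hx]

noncomputable def cA9 : Fin 4 → Fin 4 → Fin 4 → ℝ
  | 0,1,1 => -(1/3) | 0,2,2 => -(2/3) | 0,3,3 => -(2/3)
  | 1,0,1 => 1/3 | 1,1,0 => 1/3
  | 2,0,2 => 2/3 | 2,2,0 => 2/3
  | 3,0,3 => 2/3 | 3,3,0 => 2/3
  | _,_,_ => 0

noncomputable def cE9 : Fin 4 → Fin 4 → Fin 4 → ℝ
  | 0,1,1 => -(1/3) | 0,2,2 => 1/3 | 0,3,3 => 1/3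
  | 1,0,1 => -1 | 1,1,0 => -1
  | 2,0,2 => -1 | 2,2,0 => -1
  | 3,0,3 => -1 | 3,3,0 => -1
  | _,_,_ => 0

lemma christoffel_g9 (k i j : Fin 4) (x : Fin 4 → ℝ) (hx : 0 < x 0) :
    christoffel g9 k i j x = cA9 k i j * (x 0) ^ cE9 k i j := by
  rw [christoffel]
  fin_cases k <;> fin_cases i <;> fin_cases j <;>
    simp [Fin.sum_univ_four, g9_inv x hx, pd_g9 _ _ _ x hx, gE9, cA9, cE9,
        ← Real.rpow_add hx] <;>
    norm_num [← Real.rpow_add hx, mul_assoc, mul_left_comm, mul_comm] <;>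
    ring

lemma pd_congr9 (i : Fin 4) (x : Fin 4 → ℝ) (F G : (Fin 4 → ℝ) → ℝ)
    (h : ∀ y : Fin 4 → ℝ, 0 < y 0 → F y = G y) (hx : 0 < x 0) : pd i F x = pd i G x := by
  unfold pd
  have ho : {y : Fin 4 → ℝ | 0 < y 0} ∈ nhds x :=
    (isOpen_lt continuous_const (continuous_apply 0)).mem_nhds hx
  rw [Filter.EventuallyEq.fderiv_eq (Filter.eventually_of_mem ho h)]

lemma pd_christoffel9 (i m j k : Fin 4) (x : Fin 4 → ℝ) (hx : 0 < x 0) :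
    pd i (christoffel g9 m j k) x
      = if i = 0 then cA9 m j k * cE9 m j k * (x 0) ^ (cE9 m j k - 1) else 0 := by
  rw [pd_congr9 i x _ (fun y => cA9 m j k * (y 0) ^ cE9 m j k)
    (fun y hy => christoffel_g9 m j k y hy) hx, pd_mul_rpow9 _ _ _ _ hx]

noncomputable def rA9 : Fin 4 → Fin 4 → ℝ
  | 0,0 => 2/3 | 1,1 => -(2/9) | 2,2 => -(4/9) | 3,3 => -(4/9) | _,_ => 0

noncomputable def rE9 : Fin 4 → Fin 4 → ℝ
  | 0,0 => -2 | 1,1 => -(4/3) | 2,2 => -(2/3) | 3,3 => -(2/3) | _,_ => 0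

noncomputable def Brk9 (m j' : Fin 4) (j k : Fin 4) (x : Fin 4 → ℝ) : ℝ :=
  pd j' (christoffel g9 m j k) x - pd j (christoffel g9 m j' k) x
    + ∑ n : Fin 4, (christoffel g9 m j' n x * christoffel g9 n j k x
      - christoffel g9 m j n x * christoffel g9 n j' k x)

lemma ricci_eq9 (j k : Fin 4) (x : Fin 4 → ℝ) (hx : 0 < x 0) :
    ricci g9 j k x = Brk9 0 0 j k x + Brk9 1 1 j k x + Brk9 2 2 j k x + Brk9 3 3 j k x := by
  unfold ricci riem Brk9
  simp only [Fin.sum_univ_four]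
  have key : ∀ c b : ℝ, x 0 ^ (-c) * (x 0 ^ c * b) = b := by
    intro c b
    rw [← mul_assoc, ← Real.rpow_add hx]
    simp
  have key2 : ∀ c : ℝ, x 0 ^ (-c) * x 0 ^ c = 1 := by
    intro c
    rw [← Real.rpow_add hx]
    simp
  simp [g9_inv x hx, g9_apply, gE9, mul_assoc, key, key2]

lemma ricci_g9 (j k : Fin 4) (x : Fin 4 → ℝ) (hx : 0 < x 0) :
    ricci g9 j k x = rA9 j k * (x 0) ^ rE9 j k := by
  rw [ricci_eq9 j k x hx]
  unfold Brk9
  fin_cases j <;> fin_cases k <;>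
    simp [Fin.sum_univ_four, pd_christoffel9 _ _ _ _ x hx,
      christoffel_g9 _ _ _ x hx, cA9, cE9, rA9, rE9, ← Real.rpow_add hx] <;>
    norm_num [← Real.rpow_add hx, mul_assoc, mul_left_comm, mul_comm] <;>
    ring

lemma pd_f9 (j : Fin 4) (x : Fin 4 → ℝ) (hx : 0 < x 0) :
    pd j f9 x = (if j = 0 then (2:ℝ)/3 else 0) * (x 0) ^ (-1 : ℝ) := by
  have h1 : HasFDerivAt (fun y : Fin 4 → ℝ => y 0)
      (ContinuousLinearMap.proj 0 : (Fin 4 → ℝ) →L[ℝ] ℝ) x :=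
    (ContinuousLinearMap.proj (R := ℝ) (φ := fun _ : Fin 4 => ℝ) 0).hasFDerivAt
  have h2 : HasDerivAt Real.log (x 0)⁻¹ (x 0) := Real.hasDerivAt_log hx.ne'
  have h3 := (h2.comp_hasFDerivAt x h1).const_mul (2/3 : ℝ)
  have h4 : HasFDerivAt f9
      (((2:ℝ)/3) • (x 0)⁻¹ • (ContinuousLinearMap.proj 0 : (Fin 4 → ℝ) →L[ℝ] ℝ)) x := h3
  rw [pd, h4.fderiv]
  simp [Pi.single_apply, Real.rpow_neg_one]
  rcases eq_or_ne j 0 with h | h <;> simp [h, eq_comm]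

lemma hess_eq9 (i j : Fin 4) (x : Fin 4 → ℝ) (hx : 0 < x 0) :
    hess g9 f9 i j x = - (rA9 i j * (x 0) ^ rE9 i j) := by
  rw [hess]
  have hpp : pd i (pd j f9) x
      = if i = 0 then (if j = 0 then (2:ℝ)/3 else 0) * (-1) * (x 0) ^ ((-1:ℝ) - 1) else 0 := by
    rw [pd_congr9 i x _ (fun y => (if j = 0 then (2:ℝ)/3 else 0) * (y 0) ^ (-1 : ℝ))
      (fun y hy => pd_f9 j y hy) hx, pd_mul_rpow9 _ _ _ _ hx]
  rw [hpp]
  fin_cases i <;> fin_cases j <;>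
    simp [Fin.sum_univ_four, christoffel_g9 _ _ _ x hx, pd_f9 _ x hx, cA9, cE9, rA9, rE9,
      ← Real.rpow_add hx] <;>
    norm_num [← Real.rpow_add hx, mul_assoc, mul_left_comm, mul_comm] <;>
    ring

end AuxRicci9

/-- Lemma 6.4 / Theorem 1.1(iii): (g₉, f₉) is a steady gradient Ricci soliton
(∇df = −Rc), with Ricci curvature in the orthonormal frame
E₁ = ∂ₛ, E₂ = s^{−1/3}∂ₜ, E₃ = E₄ = s^{−2/3}∂ᵢ given by R₁₁ = 2/(3s²),
R₂₂ = −2/(9s²), R₃₃ = R₄₄ = −4/(9s²), R_{ij} = 0 for i ≠ j, and scalar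
curvature R = −4/(9s²). -/
theorem stmt_9 :
    ∀ x : Fin 4 → ℝ, 0 < x 0 →
      (∀ i j : Fin 4, hess g9 f9 i j x = - ricci g9 i j x) ∧
      ricci g9 0 0 x = 2 / (3 * (x 0) ^ 2) ∧
      ricci g9 1 1 x / ((x 0) ^ ((2 : ℝ) / 3)) = -2 / (9 * (x 0) ^ 2) ∧
      ricci g9 2 2 x / ((x 0) ^ ((4 : ℝ) / 3)) = -4 / (9 * (x 0) ^ 2) ∧
      ricci g9 3 3 x / ((x 0) ^ ((4 : ℝ) / 3)) = -4 / (9 * (x 0) ^ 2) ∧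
      (∀ i j : Fin 4, i ≠ j → ricci g9 i j x = 0) ∧
      scal g9 x = -4 / (9 * (x 0) ^ 2) := by
  intro x hx
  have hne : (x 0) ≠ 0 := hx.ne'
  have hpow2 : (x 0) ^ (-2 : ℝ) = ((x 0) ^ 2)⁻¹ := by
    rw [show (-2 : ℝ) = -((2:ℕ):ℝ) by norm_num, Real.rpow_neg hx.le, Real.rpow_natCast]
  refine ⟨fun i j => by rw [hess_eq9 i j x hx, ricci_g9 i j x hx], ?_, ?_, ?_, ?_, ?_, ?_⟩
  · rw [ricci_g9 0 0 x hx]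
    simp only [rA9, rE9]
    rw [hpow2]
    field_simp
  · rw [ricci_g9 1 1 x hx]
    simp only [rA9, rE9]
    rw [mul_div_assoc, ← Real.rpow_sub hx]
    norm_num
    field_simp
  · rw [ricci_g9 2 2 x hx]
    simp only [rA9, rE9]
    rw [mul_div_assoc, ← Real.rpow_sub hx]
    norm_num
    field_simp
  · rw [ricci_g9 3 3 x hx]
    simp only [rA9, rE9]
    rw [mul_div_assoc, ← Real.rpow_sub hx]
    norm_num
    field_simp
  · intro i j hij
    rw [ricci_g9 i j x hx]
    fin_cases i <;> fin_cases j <;> simp_all [rA9]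
  · rw [scal]
    simp only [Fin.sum_univ_four]
    simp [g9_inv x hx, ricci_g9 _ _ x hx, rA9, rE9, gE9, ← Real.rpow_add hx]
    norm_num [← Real.rpow_add hx, mul_assoc, mul_left_comm, mul_comm]
    field_simp
    ring
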